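/- If L is a finite-dimensional nilpotent Lie algebra over a field k, then the Frattini subalgebra Φ(L), defined as the intersection of all maximal proper Lie subalgebras of L, equals the derived subalgebra [L,L]. -/

import Mathlib

/-- The Frattini subalgebra of a Lie algebra: the intersection of all maximal proper Lie
subalgebras (a maximal proper subalgebra is precisely a coatom in the lattice of Lie
subalgebras). -/
noncomputable def frattiniLieSubalgebra (k : Type*) (L : Type*) [Field k] [LieRing L]
    [LieAlgebra k L] : LieSubalgebra k L :=
  sInf {S : LieSubalgebra k L | IsCoatom S}

section Aux

open LieModule

variable {k : Type*} {L : Type*} [Field k] [LieRing L] [LieAlgebra k L]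

/-- Any bracket of two elements lies in the derived subalgebra. -/
lemma frattiniAux.bracket_mem_derived (x y : L) : ⁅x, y⁆ ∈ LieAlgebra.derivedSeries k L 1 := by
  rw [LieAlgebra.derivedSeries_def, LieAlgebra.derivedSeriesOfIdeal_succ,
    LieAlgebra.derivedSeriesOfIdeal_zero]
  exact LieSubmodule.lie_mem_lie (LieSubmodule.mem_top x) (LieSubmodule.mem_top y)

lemma frattiniAux.derived_eq_lcs :
    LieAlgebra.derivedSeries k L 1 = lowerCentralSeries k L L 1 := by
  rw [LieAlgebra.derivedSeries_def, LieAlgebra.derivedSeriesOfIdeal_succ,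
    LieAlgebra.derivedSeriesOfIdeal_zero, LieModule.lowerCentralSeries_succ]
  rfl

/-- In a nilpotent Lie algebra, every maximal (proper) subalgebra contains the derived
subalgebra. -/
lemma frattiniAux.derived_le_coatom [LieRing.IsNilpotent L] {M : LieSubalgebra k L}
    (hM : IsCoatom M) {z : L} (hz : z ∈ LieAlgebra.derivedSeries k L 1) : z ∈ M := by
  classical
  obtain ⟨N, hN⟩ := LieModule.IsNilpotent.nilpotent (R := k) (L := L) (M := L)
  -- M is an ideal: its normalizer is ⊤.
  have hid : ∀ x : L, ∀ m ∈ M, ⁅x, m⁆ ∈ M := by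
    have hP : ∃ n, ∀ w ∈ lowerCentralSeries k L L n, w ∈ M := by
      refine ⟨N, fun w hw => ?_⟩
      rw [hN, LieSubmodule.mem_bot] at hw
      rw [hw]; exact M.zero_mem
    set n₀ := Nat.find hP with hn₀
    have hfind := Nat.find_spec hP
    have hn₀pos : n₀ ≠ 0 := by
      intro h
      apply hM.1
      rw [eq_top_iff]
      intro y _
      refine hfind y ?_
      rw [← hn₀, h]
      exact LieSubmodule.mem_top y
    obtain ⟨m, hm⟩ := Nat.exists_eq_succ_of_ne_zero hn₀pos
    have hnot := Nat.find_min hP (m := m) (by omega)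
    push_neg at hnot
    obtain ⟨x, hx, hxM⟩ := hnot
    have hxnorm : x ∈ M.normalizer := by
      rw [LieSubalgebra.mem_normalizer_iff]
      intro y hy
      have h1 : ⁅y, x⁆ ∈ lowerCentralSeries k L L n₀ := by
        rw [hm, LieModule.lowerCentralSeries_succ]
        exact LieSubmodule.lie_mem_lie (LieSubmodule.mem_top y) hx
      have h2 : ⁅x, y⁆ = -⁅y, x⁆ := by rw [lie_skew]
      rw [h2]
      exact M.neg_mem (hfind _ h1)
    have hlt : M < M.normalizer :=
      lt_of_le_of_ne M.le_normalizer (fun h => hxM (h ▸ hxnorm))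
    have htop : M.normalizer = ⊤ := hM.2 _ hlt
    intro x m hm'
    have hx : x ∈ M.normalizer := htop ▸ LieSubalgebra.mem_top x
    exact (LieSubalgebra.mem_normalizer_iff _ _).mp hx m hm'
  -- Now suppose z ∉ M and derive a contradiction.
  by_contra hzM
  set D : LieIdeal k L := LieAlgebra.derivedSeries k L 1 with hD
  set S : LieSubalgebra k L :=
    { (M.toSubmodule ⊔ D.toSubmodule : Submodule k L) with
      lie_mem' := fun {x y} _ _ =>
        Submodule.mem_sup_right ((LieSubmodule.mem_toSubmodule _).mpr
          (frattiniAux.bracket_mem_derived x y)) } with hS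
  have hMS : M < S := by
    constructor
    · intro w hw
      exact Submodule.mem_sup_left hw
    · intro hle
      exact hzM (hle (Submodule.mem_sup_right ((LieSubmodule.mem_toSubmodule _).mpr hz)))
  have hStop : S = ⊤ := hM.2 _ hMS
  have hsup : M.toSubmodule ⊔ D.toSubmodule = ⊤ := by
    rw [← LieSubalgebra.top_toSubmodule, ← hStop]
  have key : ∀ n, M.toSubmodule ⊔ (lowerCentralSeries k L L (n + 1)).toSubmodule = ⊤ := by
    intro n
    induction n with
    | zero => rwa [← frattiniAux.derived_eq_lcs]
    | succ n ih =>
      rw [eq_top_iff]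
      intro x _
      have hx : x ∈ M.toSubmodule ⊔ (lowerCentralSeries k L L (n + 1)).toSubmodule :=
        ih ▸ Submodule.mem_top
      obtain ⟨m, hm, c, hc, rfl⟩ := Submodule.mem_sup.mp hx
      refine Submodule.add_mem _ (Submodule.mem_sup_left hm) ?_
      have hle : (lowerCentralSeries k L L (n + 1)).toSubmodule ≤
          M.toSubmodule ⊔ (lowerCentralSeries k L L (n + 2)).toSubmodule := by
        rw [LieModule.lowerCentralSeries_succ, LieSubmodule.lieIdeal_oper_eq_linear_span']
        rw [Submodule.span_le]
        rintro _ ⟨y, -, c', hc', rfl⟩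
        have hy : y ∈ M.toSubmodule ⊔ (lowerCentralSeries k L L (n + 1)).toSubmodule :=
          ih ▸ Submodule.mem_top
        obtain ⟨m', hm', d, hd, rfl⟩ := Submodule.mem_sup.mp hy
        rw [add_lie]
        refine Submodule.add_mem _ ?_ ?_
        · refine Submodule.mem_sup_left ?_
          have h2 : ⁅m', c'⁆ = -⁅c', m'⁆ := by rw [lie_skew]
          rw [h2]
          exact M.neg_mem (hid c' m' hm')
        · refine Submodule.mem_sup_right ?_
          have h3 : ⁅d, c'⁆ ∈ lowerCentralSeries k L L (n + 2) := by
            have h4 : ⁅c', d⁆ ∈ lowerCentralSeries k L L (n + 2) := by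
              rw [LieModule.lowerCentralSeries_succ]
              exact LieSubmodule.lie_mem_lie (LieSubmodule.mem_top c') hd
            have h5 : ⁅d, c'⁆ = -⁅c', d⁆ := by rw [lie_skew]
            rw [h5]
            exact neg_mem h4
          exact (LieSubmodule.mem_toSubmodule _).mpr h3
      exact hle hc
  -- conclude M = ⊤, contradiction
  apply hM.1
  rw [eq_top_iff]
  intro y _
  have hy : y ∈ M.toSubmodule ⊔ (lowerCentralSeries k L L (N + 1)).toSubmodule :=
    (key N) ▸ Submodule.mem_top
  obtain ⟨m, hm, c, hc, rfl⟩ := Submodule.mem_sup.mp hy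
  have hcbot : c ∈ (⊥ : LieSubmodule k L L) := by
    rw [← hN]
    exact antitone_lowerCentralSeries k L L (Nat.le_succ N) hc
  rw [LieSubmodule.mem_bot] at hcbot
  rw [hcbot, add_zero]
  exact hm

/-- In a finite-dimensional Lie algebra, the Frattini subalgebra is contained in the derived
subalgebra. -/
lemma frattiniAux.frattini_le_derived [FiniteDimensional k L] {z : L}
    (hz : z ∈ sInf {S : LieSubalgebra k L | IsCoatom S}) :
    z ∈ LieAlgebra.derivedSeries k L 1 := by
  by_contra hzD
  set D : Submodule k L := (LieAlgebra.derivedSeries k L 1).toSubmodule with hDdef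
  have hzD' : z ∉ D := fun h => hzD ((LieSubmodule.mem_toSubmodule _).mp h)
  have hne : D.mkQ z ≠ 0 := by
    rw [Submodule.mkQ_apply, ne_eq, Submodule.Quotient.mk_eq_zero]
    exact hzD'
  obtain ⟨g, hg⟩ : ∃ g : Module.Dual k (L ⧸ D), g (D.mkQ z) ≠ 0 := by
    by_contra h
    push_neg at h
    exact hne ((Module.forall_dual_apply_eq_zero_iff k _).mp h)
  set f : L →ₗ[k] k := g.comp D.mkQ with hf
  have hDker : ∀ w ∈ D, f w = 0 := by
    intro w hw
    simp only [hf, LinearMap.comp_apply, Submodule.mkQ_apply]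
    rw [(Submodule.Quotient.mk_eq_zero _).mpr hw, map_zero]
  set W : LieSubalgebra k L :=
    { LinearMap.ker f with
      lie_mem' := fun {x y} _ _ =>
        hDker ⁅x, y⁆ ((LieSubmodule.mem_toSubmodule _).mpr
          (frattiniAux.bracket_mem_derived x y)) } with hW
  have hWmem : ∀ w : L, w ∈ W ↔ f w = 0 := fun w => LinearMap.mem_ker
  have hWcoatom : IsCoatom W := by
    constructor
    · intro h
      apply hg
      have : z ∈ W := h ▸ LieSubalgebra.mem_top z
      simpa [hf] using (hWmem z).mp this
    · intro T hT
      obtain ⟨t, htT, htW⟩ := SetLike.exists_of_lt hT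
      have hft : f t ≠ 0 := fun h => htW ((hWmem t).mpr h)
      rw [eq_top_iff]
      intro y _
      have h1 : y - (f y / f t) • t ∈ W := by
        rw [hWmem]
        simp [map_sub, map_smul, div_mul_cancel₀ _ hft]
      have h2 : y - (f y / f t) • t ∈ T := hT.le h1
      have h3 : (f y / f t) • t ∈ T := T.smul_mem _ htT
      simpa using T.add_mem h2 h3
  have : z ∈ W := sInf_le (show W ∈ {S : LieSubalgebra k L | IsCoatom S} from hWcoatom) hz
  exact hg (by simpa [hf] using (hWmem z).mp this)

end Aux

/-- For a finite-dimensional nilpotent Lie algebra `L`, the Frattini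
subalgebra `Φ(L)` equals the derived subalgebra `[L,L]`. -/
theorem frattini_eq_derived_of_nilpotent
    (k : Type*) (L : Type*) [Field k] [LieRing L] [LieAlgebra k L]
    [FiniteDimensional k L] [LieRing.IsNilpotent L] :
    frattiniLieSubalgebra k L =
      LieIdeal.toLieSubalgebra k L (LieAlgebra.derivedSeries k L 1) := by
  apply le_antisymm
  · intro z hz
    exact frattiniAux.frattini_le_derived hz
  · refine le_sInf ?_
    intro S hS z hz
    exact frattiniAux.derived_le_coatom hS hz
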